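/- Let b < 0 and f(t) = (1/(t−b), 1/(t−b)²)ᵀ for t ∈ [0,∞). (i) The design assigning mass (2−√2)/4 to the point 0 and mass (2+√2)/4 to the point −√2·b minimizes the (1,1) entry of M(ξ)⁻¹ among all designs ξ on [0,∞) with invertible information matrix. (ii) The design assigning mass 1−1/√2 to the point 0 and mass 1/√2 to the point −√2·b minimizes the (2,2) entry of M(ξ)⁻¹ among all designs ξ on [0,∞) with invertible information matrix. -/

import Mathlib

open Matrix Finset

structure Design where
  support : Finset ℝ
  weight : ℝ → ℝ
  pos : ∀ t ∈ support, 0 < weight t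
  zero : ∀ t ∉ support, weight t = 0
  sum_one : ∑ t ∈ support, weight t = 1

noncomputable def Design.infoMatrix {m : ℕ} (ξ : Design) (f : ℝ → Fin m → ℝ) :
    Matrix (Fin m) (Fin m) ℝ :=
  ∑ t ∈ ξ.support, ξ.weight t • Matrix.vecMulVec (f t) (f t)

lemma stmt19_inv00 (A : Matrix (Fin 2) (Fin 2) ℝ) : (A⁻¹) 0 0 = A 1 1 / A.det := by
  rw [Matrix.inv_def, Matrix.adjugate_fin_two, Ring.inverse_eq_inv']
  simp [div_eq_inv_mul]

lemma stmt19_inv11 (A : Matrix (Fin 2) (Fin 2) ℝ) : (A⁻¹) 1 1 = A 0 0 / A.det := by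
  rw [Matrix.inv_def, Matrix.adjugate_fin_two, Ring.inverse_eq_inv']
  simp [div_eq_inv_mul]

/-- Pointwise bound: if `K s⁴ - (d0 s + d1)²` factors with the given sign pattern,
then the dual function is bounded by `K` on `[0, ∞)`. -/
lemma stmt19_pt_bound (b r K d0 d1 : ℝ) (hb : b < 0) (hr1 : 1 ≤ r) (hK : 0 < K)
    (hid : ∀ s : ℝ, K * s ^ 4 - (d0 * s + d1) ^ 2
      = K * ((s + b) * ((s + (1 + r) * b) ^ 2 * (s - (3 + 2 * r) * b))))
    (t : ℝ) (ht : 0 ≤ t) : (d0 * (t - b)⁻¹ + d1 * ((t - b) ^ 2)⁻¹) ^ 2 ≤ K := by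
  have hs : 0 < t - b := by linarith
  have h1 : 0 ≤ (t - b) + b := by linarith
  have h3 : 0 < (t - b) - (3 + 2 * r) * b := by nlinarith
  have hnn : 0 ≤ K * (t - b) ^ 4 - (d0 * (t - b) + d1) ^ 2 := by
    rw [hid (t - b)]
    exact mul_nonneg hK.le (mul_nonneg h1 (mul_nonneg (sq_nonneg _) h3.le))
  have heq : d0 * (t - b)⁻¹ + d1 * ((t - b) ^ 2)⁻¹ = (d0 * (t - b) + d1) / (t - b) ^ 2 := by
    field_simp
  rw [heq, div_pow, div_le_iff₀ (by positivity)]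
  nlinarith [hnn]

/-- The general lower bound for any competing design, obtained from the
Cauchy–Schwarz inequality applied to the information matrix. -/
lemma stmt19_eta_bound (b : ℝ) (hb : b < 0) (f : ℝ → Fin 2 → ℝ)
    (hf : f = fun t => ![(t - b)⁻¹, ((t - b) ^ 2)⁻¹])
    (η : Design) (hsupp : ↑η.support ⊆ Set.Ici (0 : ℝ))
    (hdet : IsUnit (η.infoMatrix f).det)
    (d0 d1 K : ℝ) (hK : 0 < K)
    (hpt : ∀ t : ℝ, 0 ≤ t → (d0 * (t - b)⁻¹ + d1 * ((t - b) ^ 2)⁻¹) ^ 2 ≤ K) :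
    d0 ^ 2 / K ≤ ((η.infoMatrix f)⁻¹) 0 0 ∧ d1 ^ 2 / K ≤ ((η.infoMatrix f)⁻¹) 1 1 := by
  set N := η.infoMatrix f with hN
  set u : ℝ → ℝ := fun t => (t - b)⁻¹ with hu
  have hw : ∀ t ∈ η.support, 0 ≤ η.weight t := fun t ht => (η.pos t ht).le
  have hentry : ∀ i j, N i j = ∑ t ∈ η.support,
      η.weight t * (f t i * f t j) := by
    intro i j
    simp [hN, Design.infoMatrix, Matrix.sum_apply, Matrix.vecMulVec_apply]
  have hf0 : ∀ t, f t 0 = u t := by intro t; simp [hf, hu]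
  have hf1 : ∀ t, f t 1 = u t ^ 2 := by intro t; simp [hf, hu, ← inv_pow]
  have hA : N 0 0 = ∑ t ∈ η.support, η.weight t * (u t) ^ 2 := by
    rw [hentry]; exact Finset.sum_congr rfl fun t _ => by rw [hf0]; ring
  have hB : N 0 1 = ∑ t ∈ η.support, η.weight t * (u t) ^ 3 := by
    rw [hentry]; exact Finset.sum_congr rfl fun t _ => by rw [hf0, hf1]; ring
  have hB' : N 1 0 = ∑ t ∈ η.support, η.weight t * (u t) ^ 3 := by
    rw [hentry]; exact Finset.sum_congr rfl fun t _ => by rw [hf0, hf1]; ring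
  have hC : N 1 1 = ∑ t ∈ η.support, η.weight t * (u t) ^ 4 := by
    rw [hentry]; exact Finset.sum_congr rfl fun t _ => by rw [hf1]; ring
  have hA0 : 0 ≤ N 0 0 := by
    rw [hA]; exact Finset.sum_nonneg fun t ht => mul_nonneg (hw t ht) (sq_nonneg _)
  have hC0 : 0 ≤ N 1 1 := by
    rw [hC]
    exact Finset.sum_nonneg fun t ht => mul_nonneg (hw t ht) (by positivity)
  have hCS : (N 0 1) ^ 2 ≤ N 0 0 * N 1 1 := by
    rw [hA, hB, hC]
    have key := Finset.sum_mul_sq_le_sq_mul_sq η.support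
      (fun t => Real.sqrt (η.weight t) * u t) (fun t => Real.sqrt (η.weight t) * (u t) ^ 2)
    calc (∑ t ∈ η.support, η.weight t * u t ^ 3) ^ 2
        = (∑ t ∈ η.support, (Real.sqrt (η.weight t) * u t) *
            (Real.sqrt (η.weight t) * (u t) ^ 2)) ^ 2 := by
          congr 1
          refine Finset.sum_congr rfl fun t ht => ?_
          rw [show Real.sqrt (η.weight t) * u t * (Real.sqrt (η.weight t) * (u t) ^ 2)
              = (Real.sqrt (η.weight t) * Real.sqrt (η.weight t)) * (u t) ^ 3 by ring,
            Real.mul_self_sqrt (hw t ht)]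
      _ ≤ (∑ t ∈ η.support, (Real.sqrt (η.weight t) * u t) ^ 2) *
            ∑ t ∈ η.support, (Real.sqrt (η.weight t) * (u t) ^ 2) ^ 2 := key
      _ = (∑ t ∈ η.support, η.weight t * u t ^ 2) *
            ∑ t ∈ η.support, η.weight t * u t ^ 4 := by
          congr 1 <;> refine Finset.sum_congr rfl fun t ht => ?_
          · rw [mul_pow, Real.sq_sqrt (hw t ht)]
          · rw [mul_pow, Real.sq_sqrt (hw t ht)]; ring
  have hdet2 : N.det = N 0 0 * N 1 1 - N 0 1 ^ 2 := by
    rw [Matrix.det_fin_two, hB, hB']; ring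
  have hdpos : 0 < N.det := by
    rcases lt_or_eq_of_le (sub_nonneg.mpr hCS) with h | h
    · rw [hdet2]; linarith [h]
    · exfalso; exact (isUnit_iff_ne_zero.mp hdet) (by rw [hdet2]; linarith)
  have hq : d0 ^ 2 * N 0 0 + 2 * d0 * d1 * N 0 1 + d1 ^ 2 * N 1 1 ≤ K := by
    have hsum : d0 ^ 2 * N 0 0 + 2 * d0 * d1 * N 0 1 + d1 ^ 2 * N 1 1
        = ∑ t ∈ η.support, η.weight t * (d0 * u t + d1 * (u t) ^ 2) ^ 2 := by
      rw [hA, hB, hC, Finset.mul_sum, Finset.mul_sum, Finset.mul_sum,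
        ← Finset.sum_add_distrib, ← Finset.sum_add_distrib]
      exact Finset.sum_congr rfl fun t _ => by ring
    rw [hsum]
    calc ∑ t ∈ η.support, η.weight t * (d0 * u t + d1 * (u t) ^ 2) ^ 2
        ≤ ∑ t ∈ η.support, η.weight t * K := by
          refine Finset.sum_le_sum fun t ht => ?_
          refine mul_le_mul_of_nonneg_left ?_ (hw t ht)
          have ht0 : (0:ℝ) ≤ t := hsupp ht
          simpa [hu, ← inv_pow] using hpt t ht0
      _ = K := by rw [← Finset.sum_mul, η.sum_one, one_mul]
  constructor
  · rw [stmt19_inv00, div_le_div_iff₀ hK hdpos, hdet2]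
    nlinarith [sq_nonneg (d0 * N 0 1 + d1 * N 1 1),
      mul_le_mul_of_nonneg_left hq hC0]
  · rw [stmt19_inv11, div_le_div_iff₀ hK hdpos, hdet2]
    nlinarith [sq_nonneg (d0 * N 0 0 + d1 * N 0 1),
      mul_le_mul_of_nonneg_left hq hA0]

set_option maxHeartbeats 2000000 in
/-- for `b < 0` and `f(t) = (1/(t−b), 1/(t−b)²)ᵀ` on `[0,∞)`:
(i) the design with masses `(2−√2)/4, (2+√2)/4` at `0, √2|b|` minimizes the
`(1,1)` entry of `M(ξ)⁻¹`; (ii) the design with masses `1−1/√2, 1/√2` at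
`0, √2|b|` minimizes the `(2,2)` entry of `M(ξ)⁻¹`, in each case among all designs
with invertible information matrix. -/
theorem stmt19 (b : ℝ) (hb : b < 0)
    (f : ℝ → Fin 2 → ℝ) (hf : f = fun t => ![(t - b)⁻¹, ((t - b) ^ 2)⁻¹])
    (M₁ M₂ : Matrix (Fin 2) (Fin 2) ℝ)
    (hM₁ : M₁ = ((2 - Real.sqrt 2) / 4) • Matrix.vecMulVec (f 0) (f 0) +
      ((2 + Real.sqrt 2) / 4) • Matrix.vecMulVec (f (-(Real.sqrt 2) * b))
        (f (-(Real.sqrt 2) * b)))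
    (hM₂ : M₂ = (1 - 1 / Real.sqrt 2) • Matrix.vecMulVec (f 0) (f 0) +
      (1 / Real.sqrt 2) • Matrix.vecMulVec (f (-(Real.sqrt 2) * b))
        (f (-(Real.sqrt 2) * b))) :
    (IsUnit M₁.det ∧ ∀ η : Design, ↑η.support ⊆ Set.Ici (0 : ℝ) →
      IsUnit (η.infoMatrix f).det → M₁⁻¹ 0 0 ≤ ((η.infoMatrix f)⁻¹) 0 0) ∧
    (IsUnit M₂.det ∧ ∀ η : Design, ↑η.support ⊆ Set.Ici (0 : ℝ) →
      IsUnit (η.infoMatrix f).det → M₂⁻¹ 1 1 ≤ ((η.infoMatrix f)⁻¹) 1 1) := by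
  set r := Real.sqrt 2 with hrdef
  have hr : r ^ 2 = 2 := Real.sq_sqrt (by norm_num)
  have hr1 : 1 ≤ r := by nlinarith [Real.sqrt_nonneg 2]
  have h2 : r ^ 2 = 2 := hr
  have h3 : r ^ 3 = 2 * r := by linear_combination r * hr
  have h4 : r ^ 4 = 4 := by linear_combination (r ^ 2 + 2) * hr
  have h5 : r ^ 5 = 4 * r := by linear_combination (r ^ 3 + 2 * r) * hr
  have h6 : r ^ 6 = 8 := by linear_combination (r ^ 4 + 2 * r ^ 2 + 4) * hr
  have h7 : r ^ 7 = 8 * r := by linear_combination (r ^ 5 + 2 * r ^ 3 + 4 * r) * hr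
  have h8 : r ^ 8 = 16 := by linear_combination (r ^ 6 + 2 * r ^ 4 + 4 * r ^ 2 + 8) * hr
  have hb0 : b ≠ 0 := ne_of_lt hb
  have hnb : -b ≠ 0 := neg_ne_zero.mpr hb0
  have hr10 : r + 1 ≠ 0 := by positivity
  have hrne : r ≠ 0 := by positivity
  have e0 : (0:ℝ) - b = -b := by ring
  have e1 : -r * b - b = (r + 1) * -b := by ring
  -- entries of M₁
  have hA1 : M₁ 0 0 = (2 - r) / (2 * b ^ 2) := by
    simp only [hM₁, hf, Matrix.add_apply, Matrix.smul_apply, Matrix.vecMulVec_apply,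
      Matrix.cons_val_zero, Matrix.cons_val_one, Matrix.head_cons, smul_eq_mul, e0, e1]
    field_simp
    ring_nf
    simp only [h2, h3, h4, h5, h6, h7, h8]
    ring
  have hB1 : M₁ 0 1 = -(r - 1) / (2 * b ^ 3) := by
    simp only [hM₁, hf, Matrix.add_apply, Matrix.smul_apply, Matrix.vecMulVec_apply,
      Matrix.cons_val_zero, Matrix.cons_val_one, Matrix.head_cons, smul_eq_mul, e0, e1]
    field_simp
    ring_nf
    simp only [h2, h3, h4, h5, h6, h7, h8]
    ring
  have hB1' : M₁ 1 0 = -(r - 1) / (2 * b ^ 3) := by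
    simp only [hM₁, hf, Matrix.add_apply, Matrix.smul_apply, Matrix.vecMulVec_apply,
      Matrix.cons_val_zero, Matrix.cons_val_one, Matrix.head_cons, smul_eq_mul, e0, e1]
    field_simp
    ring_nf
    simp only [h2, h3, h4, h5, h6, h7, h8]
    ring
  have hC1 : M₁ 1 1 = (3 - 2 * r) / b ^ 4 := by
    simp only [hM₁, hf, Matrix.add_apply, Matrix.smul_apply, Matrix.vecMulVec_apply,
      Matrix.cons_val_zero, Matrix.cons_val_one, Matrix.head_cons, smul_eq_mul, e0, e1]
    field_simp
    ring_nf
    simp only [h2, h3, h4, h5, h6, h7, h8]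
    ring
  have hdet1 : M₁.det = (17 - 12 * r) / (4 * b ^ 6) := by
    rw [Matrix.det_fin_two, hA1, hB1, hB1', hC1]
    field_simp
    ring_nf
    simp only [h2, h3, h4, h5, h6, h7, h8]
    ring
  have h17 : 0 < 17 - 12 * r := by nlinarith
  have hdet1ne : M₁.det ≠ 0 := by
    rw [hdet1]
    positivity
  -- entries of M₂
  have hw2 : (1 : ℝ) - 1 / r = (r - 1) / r := by field_simp
  have hA2 : M₂ 0 0 = (r - 1) / b ^ 2 := by
    simp only [hM₂, hf, Matrix.add_apply, Matrix.smul_apply, Matrix.vecMulVec_apply,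
      Matrix.cons_val_zero, Matrix.cons_val_one, Matrix.head_cons, smul_eq_mul, e0, e1]
    field_simp
    ring_nf
    simp only [h2, h3, h4, h5, h6, h7, h8]
    ring
  have hB2 : M₂ 0 1 = -(6 - 4 * r) / b ^ 3 := by
    simp only [hM₂, hf, Matrix.add_apply, Matrix.smul_apply, Matrix.vecMulVec_apply,
      Matrix.cons_val_zero, Matrix.cons_val_one, Matrix.head_cons, smul_eq_mul, e0, e1]
    field_simp
    ring_nf
    simp only [h2, h3, h4, h5, h6, h7, h8]
    ring
  have hB2' : M₂ 1 0 = -(6 - 4 * r) / b ^ 3 := by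
    simp only [hM₂, hf, Matrix.add_apply, Matrix.smul_apply, Matrix.vecMulVec_apply,
      Matrix.cons_val_zero, Matrix.cons_val_one, Matrix.head_cons, smul_eq_mul, e0, e1]
    field_simp
    ring_nf
    simp only [h2, h3, h4, h5, h6, h7, h8]
    ring
  have hC2 : M₂ 1 1 = (8 * r - 11) / b ^ 4 := by
    simp only [hM₂, hf, Matrix.add_apply, Matrix.smul_apply, Matrix.vecMulVec_apply,
      Matrix.cons_val_zero, Matrix.cons_val_one, Matrix.head_cons, smul_eq_mul, e0, e1]
    field_simp
    ring_nf
    simp only [h2, h3, h4, h5, h6, h7, h8]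
    ring
  have hdet2 : M₂.det = (29 * r - 41) / b ^ 6 := by
    rw [Matrix.det_fin_two, hA2, hB2, hB2', hC2]
    field_simp
    ring_nf
    simp only [h2, h3, h4, h5, h6, h7, h8]
    ring
  have h29 : 0 < 29 * r - 41 := by nlinarith
  have hdet2ne : M₂.det ≠ 0 := by
    rw [hdet2]
    positivity
  constructor
  · refine ⟨isUnit_iff_ne_zero.mpr hdet1ne, fun η hsupp hηdet => ?_⟩
    have hK : (0:ℝ) < 12 + 8 * r := by linarith
    have hid : ∀ s : ℝ, (12 + 8 * r) * s ^ 4 - ((-((12 + 8 * r) * b)) * s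
          + (-((14 + 10 * r) * b ^ 2))) ^ 2
        = (12 + 8 * r) * ((s + b) * ((s + (1 + r) * b) ^ 2 * (s - (3 + 2 * r) * b))) := by
      intro s
      linear_combination (24 * s ^ 2 * b ^ 2 * r + 36 * s ^ 2 * b ^ 2 + 16 * s * b ^ 3 * r ^ 2
        + 104 * s * b ^ 3 * r + 120 * s * b ^ 3 + 16 * b ^ 4 * r ^ 2 + 80 * b ^ 4 * r
        + 80 * b ^ 4) * hr
    have hpt : ∀ t : ℝ, 0 ≤ t →
        ((-((12 + 8 * r) * b)) * (t - b)⁻¹ + (-((14 + 10 * r) * b ^ 2)) * ((t - b) ^ 2)⁻¹) ^ 2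
          ≤ 12 + 8 * r :=
      stmt19_pt_bound b r (12 + 8 * r) (-((12 + 8 * r) * b)) (-((14 + 10 * r) * b ^ 2))
        hb hr1 hK hid
    have hbnd := (stmt19_eta_bound b hb f hf η hsupp hηdet
      (-((12 + 8 * r) * b)) (-((14 + 10 * r) * b ^ 2)) (12 + 8 * r) hK hpt).1
    have hval : (-((12 + 8 * r) * b)) ^ 2 / (12 + 8 * r) = (12 + 8 * r) * b ^ 2 := by
      field_simp
    have hMinv : M₁⁻¹ 0 0 = (12 + 8 * r) * b ^ 2 := by
      rw [stmt19_inv00, hC1, hdet1]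
      rw [div_div_div_eq]
      field_simp
      ring_nf
      have hne : (17 - r * 12) ≠ 0 := ne_of_gt (by linarith)
      field_simp
      linarith [hr]
    rw [hMinv]
    rw [hval] at hbnd
    exact hbnd
  · refine ⟨isUnit_iff_ne_zero.mpr hdet2ne, fun η hsupp hηdet => ?_⟩
    have hK : (0:ℝ) < 17 + 12 * r := by linarith
    have hid : ∀ s : ℝ, (17 + 12 * r) * s ^ 4 - (((14 + 10 * r) * b) * s
          + ((17 + 12 * r) * b ^ 2)) ^ 2
        = (17 + 12 * r) * ((s + b) * ((s + (1 + r) * b) ^ 2 * (s - (3 + 2 * r) * b))) := by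
      intro s
      linear_combination (36 * s ^ 2 * b ^ 2 * r + 47 * s ^ 2 * b ^ 2 + 24 * s * b ^ 3 * r ^ 2
        + 154 * s * b ^ 3 * r + 170 * s * b ^ 3 + 24 * b ^ 4 * r ^ 2 + 118 * b ^ 4 * r
        + 119 * b ^ 4) * hr
    have hpt : ∀ t : ℝ, 0 ≤ t →
        (((14 + 10 * r) * b) * (t - b)⁻¹ + ((17 + 12 * r) * b ^ 2) * ((t - b) ^ 2)⁻¹) ^ 2
          ≤ 17 + 12 * r :=
      stmt19_pt_bound b r (17 + 12 * r) ((14 + 10 * r) * b) ((17 + 12 * r) * b ^ 2)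
        hb hr1 hK hid
    have hbnd := (stmt19_eta_bound b hb f hf η hsupp hηdet
      ((14 + 10 * r) * b) ((17 + 12 * r) * b ^ 2) (17 + 12 * r) hK hpt).2
    have hval : ((17 + 12 * r) * b ^ 2) ^ 2 / (17 + 12 * r) = (17 + 12 * r) * b ^ 4 := by
      field_simp
    have hMinv : M₂⁻¹ 1 1 = (17 + 12 * r) * b ^ 4 := by
      rw [stmt19_inv11, hA2, hdet2]
      rw [div_div_div_eq]
      field_simp
      ring_nf
      have hne : (-41 + r * 29) ≠ 0 := ne_of_gt (by linarith)
      field_simp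
      linarith [hr]
    rw [hMinv]
    rw [hval] at hbnd
    exact hbnd
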